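/- For all real x with 0 < |x| < π/2, sin x / x < (2 + cos x)/3 < (1/2)·(x/sin x + cos x). -/

import Mathlib

open Real

lemma aux_stmt4 (x : ℝ) (hx0 : 0 < x) (hx : x < π / 2) :
    sin x / x < (2 + cos x) / 3 ∧ (2 + cos x) / 3 < (1 / 2) * (x / sin x + cos x) := by
  have hs : 0 < sin x := sin_pos_of_pos_of_lt_pi hx0 (by linarith [pi_pos])
  -- derivative facts
  have d1 : ∀ y : ℝ, HasDerivAt (fun y => 2 - 2 * Real.cos y - y * Real.sin y)
      (Real.sin y - y * Real.cos y) y := by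
    intro y
    have h := ((hasDerivAt_const y (2:ℝ)).sub ((Real.hasDerivAt_cos y).const_mul (2:ℝ))).sub
      ((hasDerivAt_id y).mul (Real.hasDerivAt_sin y))
    refine h.congr_deriv ?_
    simp; ring
  have d2 : ∀ y : ℝ, HasDerivAt (fun y => y * (2 + Real.cos y) - 3 * Real.sin y)
      (2 - 2 * Real.cos y - y * Real.sin y) y := by
    intro y
    have h := ((hasDerivAt_id y).mul ((hasDerivAt_const y (2:ℝ)).add (Real.hasDerivAt_cos y))).sub
      ((Real.hasDerivAt_sin y).const_mul (3:ℝ))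
    refine h.congr_deriv ?_
    simp; ring
  have d3 : ∀ y : ℝ, HasDerivAt (fun y => 3 * y + Real.sin y * Real.cos y - 4 * Real.sin y)
      (3 + (Real.cos y * Real.cos y - Real.sin y * Real.sin y) - 4 * Real.cos y) y := by
    intro y
    have h := (((hasDerivAt_id y).const_mul (3:ℝ)).add
      ((Real.hasDerivAt_sin y).mul (Real.hasDerivAt_cos y))).sub
      ((Real.hasDerivAt_sin y).const_mul (4:ℝ))
    refine h.congr_deriv ?_
    simp; ring
  -- first: f1 := 2 - 2cos - y sin is strictly mono on [0, π/2]
  have m1 : StrictMonoOn (fun y => 2 - 2 * Real.cos y - y * Real.sin y) (Set.Icc 0 (π/2)) := by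
    apply strictMonoOn_of_deriv_pos (convex_Icc _ _)
    · fun_prop
    · intro y hy
      rw [interior_Icc] at hy
      rw [(d1 y).deriv]
      have hc : 0 < Real.cos y := cos_pos_of_mem_Ioo ⟨by linarith [hy.1, pi_pos], hy.2⟩
      have ht : y < Real.tan y := lt_tan hy.1 hy.2
      rw [tan_eq_sin_div_cos, lt_div_iff₀ hc] at ht
      linarith
  have hpos1 : ∀ y ∈ Set.Ioo (0:ℝ) (π/2), 0 < 2 - 2 * Real.cos y - y * Real.sin y := by
    intro y hy
    have := m1 (Set.left_mem_Icc.2 (by positivity)) ⟨hy.1.le, hy.2.le⟩ hy.1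
    simpa using this
  have m2 : StrictMonoOn (fun y => y * (2 + Real.cos y) - 3 * Real.sin y) (Set.Icc 0 (π/2)) := by
    apply strictMonoOn_of_deriv_pos (convex_Icc _ _)
    · fun_prop
    · intro y hy
      rw [interior_Icc] at hy
      rw [(d2 y).deriv]
      exact hpos1 y hy
  have hf : 0 < x * (2 + Real.cos x) - 3 * Real.sin x := by
    have := m2 (Set.left_mem_Icc.2 (by positivity)) ⟨hx0.le, hx.le⟩ hx0
    simpa using this
  have m3 : StrictMonoOn (fun y => 3 * y + Real.sin y * Real.cos y - 4 * Real.sin y)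
      (Set.Icc 0 (π/2)) := by
    apply strictMonoOn_of_deriv_pos (convex_Icc _ _)
    · fun_prop
    · intro y hy
      rw [interior_Icc] at hy
      rw [(d3 y).deriv]
      have hsy : 0 < Real.sin y := sin_pos_of_pos_of_lt_pi hy.1 (by linarith [pi_pos, hy.2])
      have hsq : Real.sin y ^ 2 + Real.cos y ^ 2 = 1 := sin_sq_add_cos_sq y
      have hc1 : Real.cos y < 1 := by nlinarith
      nlinarith [mul_pos (sub_pos.2 hc1) (sub_pos.2 hc1)]
  have hg : 0 < 3 * x + Real.sin x * Real.cos x - 4 * Real.sin x := by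
    have := m3 (Set.left_mem_Icc.2 (by positivity)) ⟨hx0.le, hx.le⟩ hx0
    simpa using this
  constructor
  · rw [div_lt_div_iff₀ hx0 (by norm_num : (0:ℝ) < 3)]
    linarith
  · have hr : (1 / 2 : ℝ) * (x / Real.sin x + Real.cos x)
        = (x + Real.sin x * Real.cos x) / (2 * Real.sin x) := by
      field_simp
    rw [hr, div_lt_div_iff₀ (by norm_num : (0:ℝ) < 3) (by positivity)]
    nlinarith

theorem stmt_4 (x : ℝ) (h1 : 0 < |x|) (h2 : |x| < π / 2) :
    sin x / x < (2 + cos x) / 3 ∧ (2 + cos x) / 3 < (1 / 2) * (x / sin x + cos x) := by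
  rcases lt_trichotomy x 0 with hx | hx | hx
  · have h2' : -x < π / 2 := by rwa [abs_of_neg hx] at h2
    have := aux_stmt4 (-x) (by linarith) h2'
    simpa [Real.sin_neg, Real.cos_neg, neg_div_neg_eq] using this
  · simp [hx] at h1
  · have h2' : x < π / 2 := by rwa [abs_of_pos hx] at h2
    exact aux_stmt4 x hx h2'
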